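/- Let 1/4 < H < 1 and let ρ be a real number satisfying: ρ < 4H-3 if 1/4 < H < 1/2, and ρ < 2(H-1) if 1/2 ≤ H < 1. Then the triple series ∑_{j ∈ ℤ²₀} |j|^{2ρ+2} ∑_{h ∈ ℤ²₀, h ≠ j} ∑_{l ∈ ℤ²₀, l ≠ j, l ≠ h} |h-l|^{2ρ+2} / (|h|^{4H} |l|^{4H} |h-j|^{4H} |l-j|^{4H}) converges (is finite). -/

import Mathlib

/-- Euclidean norm of an element of `ℤ²`. -/
noncomputable def znorm (k : ℤ × ℤ) : ℝ :=
  Real.sqrt ((k.1 : ℝ) ^ 2 + (k.2 : ℝ) ^ 2)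

open scoped ENNReal

namespace Statement6Aux

lemma znorm_nonneg (k : ℤ × ℤ) : 0 ≤ znorm k := Real.sqrt_nonneg _

lemma znorm_eq_abs (k : ℤ × ℤ) :
    znorm k = ‖(((k.1 : ℝ) : ℂ) + ((k.2 : ℝ) : ℂ) * Complex.I)‖ := by
  rw [Complex.norm_add_mul_I, znorm]

lemma znorm_add_le (a b : ℤ × ℤ) : znorm (a + b) ≤ znorm a + znorm b := by
  rw [znorm_eq_abs, znorm_eq_abs, znorm_eq_abs]
  have h : (((a + b).1 : ℝ) : ℂ) + (((a + b).2 : ℝ) : ℂ) * Complex.I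
      = ((((a.1 : ℝ) : ℂ) + ((a.2 : ℝ) : ℂ) * Complex.I)
        + (((b.1 : ℝ) : ℂ) + ((b.2 : ℝ) : ℂ) * Complex.I)) := by
    simp only [Prod.fst_add, Prod.snd_add]
    push_cast
    ring
  rw [h]
  exact norm_add_le _ _

lemma znorm_neg (a : ℤ × ℤ) : znorm (-a) = znorm a := by
  unfold znorm
  congr 1
  simp only [Prod.fst_neg, Prod.snd_neg]
  push_cast
  ring

lemma one_le_znorm {k : ℤ × ℤ} (hk : k ≠ 0) : 1 ≤ znorm k := by
  have h : k.1 ≠ 0 ∨ k.2 ≠ 0 := by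
    by_contra h
    push_neg at h
    exact hk (Prod.ext h.1 h.2)
  have h1 : (1 : ℝ) ≤ (k.1 : ℝ) ^ 2 + (k.2 : ℝ) ^ 2 := by
    rcases h with h | h
    · have h2 : (1 : ℝ) ≤ |(k.1 : ℝ)| := by exact_mod_cast Int.one_le_abs h
      nlinarith [sq_nonneg ((k.2 : ℝ)), sq_abs ((k.1 : ℝ))]
    · have h2 : (1 : ℝ) ≤ |(k.2 : ℝ)| := by exact_mod_cast Int.one_le_abs h
      nlinarith [sq_nonneg ((k.1 : ℝ)), sq_abs ((k.2 : ℝ))]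
  calc (1 : ℝ) = Real.sqrt 1 := Real.sqrt_one.symm
    _ ≤ znorm k := Real.sqrt_le_sqrt h1

lemma znorm_pos {k : ℤ × ℤ} (hk : k ≠ 0) : 0 < znorm k :=
  lt_of_lt_of_le one_pos (one_le_znorm hk)

/-- `|u| ≤ |v| + |v - u|`. -/
lemma znorm_le (u v : ℤ × ℤ) : znorm u ≤ znorm v + znorm (v - u) := by
  have e : u = v + -(v - u) := by ring
  calc znorm u = znorm (v + -(v - u)) := by rw [← e]
    _ ≤ znorm v + znorm (-(v - u)) := znorm_add_le _ _
    _ = znorm v + znorm (v - u) := by rw [znorm_neg]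

lemma znorm_sub_le (h l j : ℤ × ℤ) : znorm (h - l) ≤ znorm (h - j) + znorm (l - j) := by
  have e : h - l = (h - j) + -(l - j) := by ring
  rw [e]
  refine (znorm_add_le _ _).trans ?_
  rw [znorm_neg]

lemma pns (x : ℤ × ℤ) (e : ℝ) : 0 ≤ znorm x ^ e := Real.rpow_nonneg (znorm_nonneg x) e

/-- The basic lattice sum. -/
noncomputable def G (s : ℝ) : ℝ≥0∞ := ∑' k : ℤ × ℤ, ENNReal.ofReal (znorm k ^ (-s))

lemma G_lt_top {s : ℝ} (hs : 2 < s) : G s < ⊤ := by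
  have hsum : Summable fun x : Fin 2 → ℤ => ‖x‖ ^ (-s) :=
    EisensteinSeries.summable_one_div_norm_rpow hs
  have hsum2 : Summable fun k : ℤ × ℤ => ‖(finTwoArrowEquiv ℤ).symm k‖ ^ (-s) :=
    ((finTwoArrowEquiv ℤ).symm.summable_iff).mpr hsum
  have hle : ∀ k : ℤ × ℤ,
      ENNReal.ofReal (znorm k ^ (-s)) ≤
        ENNReal.ofReal (‖(finTwoArrowEquiv ℤ).symm k‖ ^ (-s)) := by
    intro k
    apply ENNReal.ofReal_le_ofReal
    have hnorm : ‖(finTwoArrowEquiv ℤ).symm k‖ = max ((k.1.natAbs : ℝ)) ((k.2.natAbs : ℝ)) := by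
      rw [EisensteinSeries.norm_eq_max_natAbs]
      simp [finTwoArrowEquiv]
    by_cases hk : k = 0
    · subst hk
      have : znorm 0 = 0 := by simp [znorm]
      rw [this, Real.zero_rpow (by intro h; rw [neg_eq_zero] at h; linarith)]
      exact Real.rpow_nonneg (norm_nonneg _) _
    · apply Real.rpow_le_rpow_of_nonpos
      · rw [hnorm]
        have h : k.1 ≠ 0 ∨ k.2 ≠ 0 := by
          by_contra h
          push_neg at h
          exact hk (Prod.ext h.1 h.2)
        rcases h with h | h
        · have : 0 < (k.1.natAbs : ℝ) := by
            exact_mod_cast Nat.pos_of_ne_zero (Int.natAbs_ne_zero.mpr h)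
          exact lt_max_of_lt_left this
        · have : 0 < (k.2.natAbs : ℝ) := by
            exact_mod_cast Nat.pos_of_ne_zero (Int.natAbs_ne_zero.mpr h)
          exact lt_max_of_lt_right this
      · rw [hnorm]
        have h1 : ((k.1.natAbs : ℝ)) ≤ znorm k := by
          have : ((k.1.natAbs : ℝ)) = |(k.1 : ℝ)| := by rw [Nat.cast_natAbs]; norm_cast
          rw [this, ← Real.sqrt_sq_eq_abs]
          exact Real.sqrt_le_sqrt (by nlinarith [sq_nonneg ((k.2 : ℝ))])
        have h2 : ((k.2.natAbs : ℝ)) ≤ znorm k := by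
          have : ((k.2.natAbs : ℝ)) = |(k.2 : ℝ)| := by rw [Nat.cast_natAbs]; norm_cast
          rw [this, ← Real.sqrt_sq_eq_abs]
          exact Real.sqrt_le_sqrt (by nlinarith [sq_nonneg ((k.1 : ℝ))])
        exact max_le h1 h2
      · linarith
  calc G s ≤ ∑' k : ℤ × ℤ, ENNReal.ofReal (‖(finTwoArrowEquiv ℤ).symm k‖ ^ (-s)) :=
        ENNReal.tsum_le_tsum hle
    _ = ENNReal.ofReal (∑' k : ℤ × ℤ, ‖(finTwoArrowEquiv ℤ).symm k‖ ^ (-s)) :=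
        (ENNReal.ofReal_tsum_of_nonneg (fun k => Real.rpow_nonneg (norm_nonneg _) _) hsum2).symm
    _ < ⊤ := ENNReal.ofReal_lt_top

lemma key_half {x y J a b θ : ℝ} (hx : 0 < x) (hxy : x ≤ y) (hJ : 0 < J)
    (hsum : J ≤ x + y) (hθ0 : 0 ≤ θ) (hθb : θ ≤ b) :
    x ^ (-a) * y ^ (-b) ≤ (2 / J) ^ θ * x ^ (-(a + b - θ)) := by
  have hy : 0 < y := lt_of_lt_of_le hx hxy
  have hy2 : J / 2 ≤ y := by linarith
  have h1 : y ^ (-b) = y ^ (-(b - θ)) * y ^ (-θ) := by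
    rw [← Real.rpow_add hy]; congr 1; ring
  have h2 : y ^ (-θ) ≤ (J / 2) ^ (-θ) :=
    Real.rpow_le_rpow_of_nonpos (by positivity) hy2 (by linarith)
  have h3 : (J / 2) ^ (-θ) = (2 / J) ^ θ := by
    rw [Real.rpow_neg (by positivity), ← Real.inv_rpow (by positivity), inv_div]
  have h4 : y ^ (-(b - θ)) ≤ x ^ (-(b - θ)) :=
    Real.rpow_le_rpow_of_nonpos hx hxy (by linarith)
  have h5 : x ^ (-a) * x ^ (-(b - θ)) = x ^ (-(a + b - θ)) := by
    rw [← Real.rpow_add hx]; congr 1; ring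
  calc x ^ (-a) * y ^ (-b) = (x ^ (-a) * y ^ (-(b - θ))) * y ^ (-θ) := by rw [h1]; ring
    _ ≤ (x ^ (-a) * x ^ (-(b - θ))) * (2 / J) ^ θ := by
        rw [← h3]
        apply mul_le_mul _ h2 (Real.rpow_nonneg hy.le _)
          (mul_nonneg (Real.rpow_nonneg hx.le _) (Real.rpow_nonneg hx.le _))
        exact mul_le_mul_of_nonneg_left h4 (Real.rpow_nonneg hx.le _)
    _ = (2 / J) ^ θ * x ^ (-(a + b - θ)) := by rw [h5]; ring

lemma key {x y J a b θ : ℝ} (hx : 0 < x) (hy : 0 < y) (hJ : 0 < J)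
    (hsum : J ≤ x + y) (hθ0 : 0 ≤ θ) (hθa : θ ≤ a) (hθb : θ ≤ b) :
    x ^ (-a) * y ^ (-b) ≤ (2 / J) ^ θ * (x ^ (-(a + b - θ)) + y ^ (-(a + b - θ))) := by
  rcases le_total x y with hxy | hxy
  · calc x ^ (-a) * y ^ (-b) ≤ (2 / J) ^ θ * x ^ (-(a + b - θ)) :=
        key_half hx hxy hJ hsum hθ0 hθb
      _ ≤ (2 / J) ^ θ * (x ^ (-(a + b - θ)) + y ^ (-(a + b - θ))) := by
        apply mul_le_mul_of_nonneg_left _ (Real.rpow_nonneg (by positivity) _)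
        exact le_add_of_nonneg_right (Real.rpow_nonneg hy.le _)
  · have h := key_half (a := b) (b := a) hy hxy hJ (by linarith) hθ0 hθa
    calc x ^ (-a) * y ^ (-b) = y ^ (-b) * x ^ (-a) := by ring
      _ ≤ (2 / J) ^ θ * y ^ (-(b + a - θ)) := h
      _ = (2 / J) ^ θ * y ^ (-(a + b - θ)) := by rw [show -(b + a - θ) = -(a + b - θ) by ring]
      _ ≤ (2 / J) ^ θ * (x ^ (-(a + b - θ)) + y ^ (-(a + b - θ))) := by
        apply mul_le_mul_of_nonneg_left _ (Real.rpow_nonneg (by positivity) _)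
        exact le_add_of_nonneg_left (Real.rpow_nonneg hx.le _)

lemma pair_sum_le {ι : Type*} {j : ℤ × ℤ} (hj : j ≠ 0) {a b θ : ℝ}
    (hθ0 : 0 ≤ θ) (hθa : θ ≤ a) (hθb : θ ≤ b)
    (f : ι → ℤ × ℤ) (hf : Function.Injective f) (h0 : ∀ i, f i ≠ 0) (hne : ∀ i, f i ≠ j) :
    ∑' i, ENNReal.ofReal (znorm (f i) ^ (-a) * znorm (f i - j) ^ (-b))
      ≤ ENNReal.ofReal ((2 / znorm j) ^ θ) * (G (a + b - θ) + G (a + b - θ)) := by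
  have hJ : 0 < znorm j := znorm_pos hj
  calc ∑' i, ENNReal.ofReal (znorm (f i) ^ (-a) * znorm (f i - j) ^ (-b))
      ≤ ∑' i, (ENNReal.ofReal ((2 / znorm j) ^ θ) *
          (ENNReal.ofReal (znorm (f i) ^ (-(a + b - θ))) +
            ENNReal.ofReal (znorm (f i - j) ^ (-(a + b - θ))))) := by
        apply ENNReal.tsum_le_tsum
        intro i
        rw [← ENNReal.ofReal_add (pns _ _) (pns _ _),
          ← ENNReal.ofReal_mul (Real.rpow_nonneg (by positivity) θ)]
        apply ENNReal.ofReal_le_ofReal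
        exact key (znorm_pos (h0 i)) (znorm_pos (sub_ne_zero.mpr (hne i))) hJ
          (znorm_le j (f i)) hθ0 hθa hθb
    _ = ENNReal.ofReal ((2 / znorm j) ^ θ) *
        ((∑' i, ENNReal.ofReal (znorm (f i) ^ (-(a + b - θ)))) +
          ∑' i, ENNReal.ofReal (znorm (f i - j) ^ (-(a + b - θ)))) := by
        rw [ENNReal.tsum_mul_left, ENNReal.tsum_add]
    _ ≤ ENNReal.ofReal ((2 / znorm j) ^ θ) * (G (a + b - θ) + G (a + b - θ)) := by
        apply mul_le_mul_right
        apply add_le_add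
        · exact ENNReal.tsum_comp_le_tsum_of_injective hf
            (fun k => ENNReal.ofReal (znorm k ^ (-(a + b - θ))))
        · exact ENNReal.tsum_comp_le_tsum_of_injective
            (show Function.Injective fun i => f i - j from
              fun x y hxy => hf (by rwa [sub_left_inj] at hxy))
            (fun k => ENNReal.ofReal (znorm k ^ (-(a + b - θ))))

/-- The majorant function. -/
noncomputable def mfun (γ a₁ b₁ a₂ b₂ : ℝ) (j h l : ℤ × ℤ) : ℝ :=
  znorm j ^ γ *
    ((znorm h ^ (-a₁) * znorm (h - j) ^ (-b₁)) * (znorm l ^ (-a₂) * znorm (l - j) ^ (-b₂)))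

set_option maxHeartbeats 1000000 in
lemma master {γ a₁ b₁ a₂ b₂ θ₁ θ₂ : ℝ}
    (h10 : 0 ≤ θ₁) (h1a : θ₁ ≤ a₁) (h1b : θ₁ ≤ b₁)
    (h20 : 0 ≤ θ₂) (h2a : θ₂ ≤ a₂) (h2b : θ₂ ≤ b₂)
    (hs1 : 2 < a₁ + b₁ - θ₁) (hs2 : 2 < a₂ + b₂ - θ₂) (hs0 : 2 < θ₁ + θ₂ - γ) :
    (∑' j : {j : ℤ × ℤ // j ≠ 0}, ∑' h : {h : ℤ × ℤ // h ≠ 0 ∧ h ≠ j.1},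
      ∑' l : {l : ℤ × ℤ // l ≠ 0 ∧ l ≠ j.1 ∧ l ≠ h.1},
        ENNReal.ofReal (mfun γ a₁ b₁ a₂ b₂ j.1 h.1 l.1)) < ⊤ := by
  set S₁ : ℝ≥0∞ := G (a₁ + b₁ - θ₁) + G (a₁ + b₁ - θ₁) with hS₁
  set S₂ : ℝ≥0∞ := G (a₂ + b₂ - θ₂) + G (a₂ + b₂ - θ₂) with hS₂
  have hS₁top : S₁ < ⊤ := by
    rw [hS₁]
    exact ENNReal.add_lt_top.mpr ⟨G_lt_top hs1, G_lt_top hs1⟩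
  have hS₂top : S₂ < ⊤ := by
    rw [hS₂]
    exact ENNReal.add_lt_top.mpr ⟨G_lt_top hs2, G_lt_top hs2⟩
  have hstep : ∀ j : {j : ℤ × ℤ // j ≠ 0},
      (∑' h : {h : ℤ × ℤ // h ≠ 0 ∧ h ≠ j.1},
        ∑' l : {l : ℤ × ℤ // l ≠ 0 ∧ l ≠ j.1 ∧ l ≠ h.1},
          ENNReal.ofReal (mfun γ a₁ b₁ a₂ b₂ j.1 h.1 l.1))
      ≤ ENNReal.ofReal (znorm j.1 ^ γ * ((2 / znorm j.1) ^ θ₁ * (2 / znorm j.1) ^ θ₂)) *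
          (S₁ * S₂) := by
    rintro ⟨j, hj⟩
    have hJ : 0 < znorm j := znorm_pos hj
    have hl : ∀ h : {h : ℤ × ℤ // h ≠ 0 ∧ h ≠ j},
        (∑' l : {l : ℤ × ℤ // l ≠ 0 ∧ l ≠ j ∧ l ≠ h.1},
          ENNReal.ofReal (mfun γ a₁ b₁ a₂ b₂ j h.1 l.1))
        ≤ ENNReal.ofReal (znorm j ^ γ * (znorm h.1 ^ (-a₁) * znorm (h.1 - j) ^ (-b₁))) *
            (ENNReal.ofReal ((2 / znorm j) ^ θ₂) * S₂) := by
      intro h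
      have heq : ∀ l : {l : ℤ × ℤ // l ≠ 0 ∧ l ≠ j ∧ l ≠ h.1},
          ENNReal.ofReal (mfun γ a₁ b₁ a₂ b₂ j h.1 l.1)
          = ENNReal.ofReal (znorm j ^ γ * (znorm h.1 ^ (-a₁) * znorm (h.1 - j) ^ (-b₁))) *
              ENNReal.ofReal (znorm l.1 ^ (-a₂) * znorm (l.1 - j) ^ (-b₂)) := by
        intro l
        rw [← ENNReal.ofReal_mul
          (mul_nonneg (pns j γ) (mul_nonneg (pns _ _) (pns _ _)))]
        congr 1
        unfold mfun
        ring
      calc (∑' l : {l : ℤ × ℤ // l ≠ 0 ∧ l ≠ j ∧ l ≠ h.1},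
            ENNReal.ofReal (mfun γ a₁ b₁ a₂ b₂ j h.1 l.1))
          = ∑' l : {l : ℤ × ℤ // l ≠ 0 ∧ l ≠ j ∧ l ≠ h.1},
              ENNReal.ofReal (znorm j ^ γ * (znorm h.1 ^ (-a₁) * znorm (h.1 - j) ^ (-b₁))) *
                ENNReal.ofReal (znorm l.1 ^ (-a₂) * znorm (l.1 - j) ^ (-b₂)) :=
            tsum_congr heq
        _ = ENNReal.ofReal (znorm j ^ γ * (znorm h.1 ^ (-a₁) * znorm (h.1 - j) ^ (-b₁))) *
              ∑' l : {l : ℤ × ℤ // l ≠ 0 ∧ l ≠ j ∧ l ≠ h.1},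
                ENNReal.ofReal (znorm l.1 ^ (-a₂) * znorm (l.1 - j) ^ (-b₂)) :=
            ENNReal.tsum_mul_left
        _ ≤ _ := by
            apply mul_le_mul_right
            exact pair_sum_le hj h20 h2a h2b Subtype.val Subtype.val_injective
              (fun l => l.2.1) (fun l => l.2.2.1)
    calc (∑' h : {h : ℤ × ℤ // h ≠ 0 ∧ h ≠ j},
          ∑' l : {l : ℤ × ℤ // l ≠ 0 ∧ l ≠ j ∧ l ≠ h.1},
            ENNReal.ofReal (mfun γ a₁ b₁ a₂ b₂ j h.1 l.1))
        ≤ ∑' h : {h : ℤ × ℤ // h ≠ 0 ∧ h ≠ j},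
            ENNReal.ofReal (znorm j ^ γ * (znorm h.1 ^ (-a₁) * znorm (h.1 - j) ^ (-b₁))) *
              (ENNReal.ofReal ((2 / znorm j) ^ θ₂) * S₂) := ENNReal.tsum_le_tsum hl
      _ = (∑' h : {h : ℤ × ℤ // h ≠ 0 ∧ h ≠ j},
            ENNReal.ofReal (znorm j ^ γ * (znorm h.1 ^ (-a₁) * znorm (h.1 - j) ^ (-b₁)))) *
              (ENNReal.ofReal ((2 / znorm j) ^ θ₂) * S₂) := ENNReal.tsum_mul_right
      _ = (ENNReal.ofReal (znorm j ^ γ) *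
            ∑' h : {h : ℤ × ℤ // h ≠ 0 ∧ h ≠ j},
              ENNReal.ofReal (znorm h.1 ^ (-a₁) * znorm (h.1 - j) ^ (-b₁))) *
              (ENNReal.ofReal ((2 / znorm j) ^ θ₂) * S₂) := by
          rw [← ENNReal.tsum_mul_left]
          congr 1
          exact tsum_congr fun h => ENNReal.ofReal_mul (pns j γ)
      _ ≤ (ENNReal.ofReal (znorm j ^ γ) *
            (ENNReal.ofReal ((2 / znorm j) ^ θ₁) * S₁)) *
              (ENNReal.ofReal ((2 / znorm j) ^ θ₂) * S₂) := by
          apply mul_le_mul_left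
          apply mul_le_mul_right
          exact pair_sum_le hj h10 h1a h1b Subtype.val Subtype.val_injective
            (fun h => h.2.1) (fun h => h.2.2)
      _ = ENNReal.ofReal (znorm j ^ γ * ((2 / znorm j) ^ θ₁ * (2 / znorm j) ^ θ₂)) *
            (S₁ * S₂) := by
          rw [ENNReal.ofReal_mul (pns j γ),
            ENNReal.ofReal_mul (Real.rpow_nonneg (by positivity) θ₁)]
          ring
  have hsimp : ∀ j : {j : ℤ × ℤ // j ≠ 0},
      ENNReal.ofReal (znorm j.1 ^ γ * ((2 / znorm j.1) ^ θ₁ * (2 / znorm j.1) ^ θ₂))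
        = ENNReal.ofReal (2 ^ θ₁ * 2 ^ θ₂) *
            ENNReal.ofReal (znorm j.1 ^ (-(θ₁ + θ₂ - γ))) := by
    rintro ⟨j, hj⟩
    have hJ : 0 < znorm j := znorm_pos hj
    rw [← ENNReal.ofReal_mul (mul_nonneg (Real.rpow_nonneg (by norm_num) _)
      (Real.rpow_nonneg (by norm_num) _))]
    congr 1
    have e1 : (2 / znorm j) ^ θ₁ = 2 ^ θ₁ * znorm j ^ (-θ₁) := by
      rw [Real.div_rpow (by norm_num) (znorm_nonneg j), Real.rpow_neg (znorm_nonneg j),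
        div_eq_mul_inv]
    have e2 : (2 / znorm j) ^ θ₂ = 2 ^ θ₂ * znorm j ^ (-θ₂) := by
      rw [Real.div_rpow (by norm_num) (znorm_nonneg j), Real.rpow_neg (znorm_nonneg j),
        div_eq_mul_inv]
    rw [e1, e2, show -(θ₁ + θ₂ - γ) = γ + -θ₁ + -θ₂ by ring, Real.rpow_add hJ,
      Real.rpow_add hJ]
    ring
  calc (∑' j : {j : ℤ × ℤ // j ≠ 0}, ∑' h : {h : ℤ × ℤ // h ≠ 0 ∧ h ≠ j.1},
        ∑' l : {l : ℤ × ℤ // l ≠ 0 ∧ l ≠ j.1 ∧ l ≠ h.1},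
          ENNReal.ofReal (mfun γ a₁ b₁ a₂ b₂ j.1 h.1 l.1))
      ≤ ∑' j : {j : ℤ × ℤ // j ≠ 0},
          ENNReal.ofReal (znorm j.1 ^ γ * ((2 / znorm j.1) ^ θ₁ * (2 / znorm j.1) ^ θ₂)) *
            (S₁ * S₂) := ENNReal.tsum_le_tsum hstep
    _ = ∑' j : {j : ℤ × ℤ // j ≠ 0},
          (ENNReal.ofReal (2 ^ θ₁ * 2 ^ θ₂) * (S₁ * S₂)) *
            ENNReal.ofReal (znorm j.1 ^ (-(θ₁ + θ₂ - γ))) := by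
        refine tsum_congr fun j => ?_
        rw [hsimp j]
        ring
    _ = (ENNReal.ofReal (2 ^ θ₁ * 2 ^ θ₂) * (S₁ * S₂)) *
          ∑' j : {j : ℤ × ℤ // j ≠ 0},
            ENNReal.ofReal (znorm j.1 ^ (-(θ₁ + θ₂ - γ))) := ENNReal.tsum_mul_left
    _ ≤ (ENNReal.ofReal (2 ^ θ₁ * 2 ^ θ₂) * (S₁ * S₂)) * G (θ₁ + θ₂ - γ) := by
        apply mul_le_mul_right
        exact ENNReal.tsum_comp_le_tsum_of_injective Subtype.val_injective
          (fun k => ENNReal.ofReal (znorm k ^ (-(θ₁ + θ₂ - γ))))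
    _ < ⊤ := ENNReal.mul_lt_top
        (ENNReal.mul_lt_top ENNReal.ofReal_lt_top (ENNReal.mul_lt_top hS₁top hS₂top))
        (G_lt_top hs0)

lemma bridge (α β γ a₁ b₁ a₂ b₂ K : ℝ) (hK : 0 ≤ K)
    (hpt : ∀ j h l : ℤ × ℤ, j ≠ 0 → h ≠ 0 → h ≠ j → l ≠ 0 → l ≠ j → l ≠ h →
      znorm j ^ α * (znorm (h - l) ^ α /
        (znorm h ^ β * znorm l ^ β * znorm (h - j) ^ β * znorm (l - j) ^ β))
        ≤ K * mfun γ a₁ b₁ a₂ b₂ j h l)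
    (hM : (∑' j : {j : ℤ × ℤ // j ≠ 0}, ∑' h : {h : ℤ × ℤ // h ≠ 0 ∧ h ≠ j.1},
      ∑' l : {l : ℤ × ℤ // l ≠ 0 ∧ l ≠ j.1 ∧ l ≠ h.1},
        ENNReal.ofReal (mfun γ a₁ b₁ a₂ b₂ j.1 h.1 l.1)) < ⊤) :
    (∑' j : {j : ℤ × ℤ // j ≠ 0},
      ENNReal.ofReal (znorm j.1 ^ α) *
        ∑' h : {h : ℤ × ℤ // h ≠ 0 ∧ h ≠ j.1},
          ∑' l : {l : ℤ × ℤ // l ≠ 0 ∧ l ≠ j.1 ∧ l ≠ h.1},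
            ENNReal.ofReal
              (znorm (h.1 - l.1) ^ α /
                (znorm h.1 ^ β * znorm l.1 ^ β *
                  znorm (h.1 - j.1) ^ β * znorm (l.1 - j.1) ^ β))) < ⊤ := by
  calc (∑' j : {j : ℤ × ℤ // j ≠ 0},
        ENNReal.ofReal (znorm j.1 ^ α) *
          ∑' h : {h : ℤ × ℤ // h ≠ 0 ∧ h ≠ j.1},
            ∑' l : {l : ℤ × ℤ // l ≠ 0 ∧ l ≠ j.1 ∧ l ≠ h.1},
              ENNReal.ofReal
                (znorm (h.1 - l.1) ^ α /
                  (znorm h.1 ^ β * znorm l.1 ^ β *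
                    znorm (h.1 - j.1) ^ β * znorm (l.1 - j.1) ^ β)))
      = ∑' j : {j : ℤ × ℤ // j ≠ 0}, ∑' h : {h : ℤ × ℤ // h ≠ 0 ∧ h ≠ j.1},
          ∑' l : {l : ℤ × ℤ // l ≠ 0 ∧ l ≠ j.1 ∧ l ≠ h.1},
            ENNReal.ofReal (znorm j.1 ^ α) *
              ENNReal.ofReal
                (znorm (h.1 - l.1) ^ α /
                  (znorm h.1 ^ β * znorm l.1 ^ β *
                    znorm (h.1 - j.1) ^ β * znorm (l.1 - j.1) ^ β)) := by
        refine tsum_congr fun j => ?_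
        rw [← ENNReal.tsum_mul_left]
        exact tsum_congr fun h => ENNReal.tsum_mul_left.symm
    _ ≤ ∑' j : {j : ℤ × ℤ // j ≠ 0}, ∑' h : {h : ℤ × ℤ // h ≠ 0 ∧ h ≠ j.1},
          ∑' l : {l : ℤ × ℤ // l ≠ 0 ∧ l ≠ j.1 ∧ l ≠ h.1},
            ENNReal.ofReal K * ENNReal.ofReal (mfun γ a₁ b₁ a₂ b₂ j.1 h.1 l.1) := by
        refine ENNReal.tsum_le_tsum fun j => ENNReal.tsum_le_tsum fun h =>
          ENNReal.tsum_le_tsum fun l => ?_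
        rw [← ENNReal.ofReal_mul (pns j.1 α), ← ENNReal.ofReal_mul hK]
        exact ENNReal.ofReal_le_ofReal
          (hpt j.1 h.1 l.1 j.2 h.2.1 h.2.2 l.2.1 l.2.2.1 l.2.2.2)
    _ = ENNReal.ofReal K *
          ∑' j : {j : ℤ × ℤ // j ≠ 0}, ∑' h : {h : ℤ × ℤ // h ≠ 0 ∧ h ≠ j.1},
            ∑' l : {l : ℤ × ℤ // l ≠ 0 ∧ l ≠ j.1 ∧ l ≠ h.1},
              ENNReal.ofReal (mfun γ a₁ b₁ a₂ b₂ j.1 h.1 l.1) := by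
        simp_rw [ENNReal.tsum_mul_left]
    _ < ⊤ := ENNReal.mul_lt_top ENNReal.ofReal_lt_top hM

end Statement6Aux

open Statement6Aux in
set_option maxHeartbeats 1000000 in
theorem statement_6 (H ρ : ℝ) (hH1 : 1 / 4 < H) (hH2 : H < 1)
    (hρ1 : 1 / 4 < H → H < 1 / 2 → ρ < 4 * H - 3)
    (hρ2 : 1 / 2 ≤ H → H < 1 → ρ < 2 * (H - 1)) :
    (∑' j : {j : ℤ × ℤ // j ≠ 0},
      ENNReal.ofReal (znorm j.1 ^ (2 * ρ + 2)) *
        ∑' h : {h : ℤ × ℤ // h ≠ 0 ∧ h ≠ j.1},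
          ∑' l : {l : ℤ × ℤ // l ≠ 0 ∧ l ≠ j.1 ∧ l ≠ h.1},
            ENNReal.ofReal
              (znorm (h.1 - l.1) ^ (2 * ρ + 2) /
                (znorm h.1 ^ (4 * H) * znorm l.1 ^ (4 * H) *
                  znorm (h.1 - j.1) ^ (4 * H) * znorm (l.1 - j.1) ^ (4 * H)))) < ⊤ := by
  by_cases hα : 2 * ρ + 2 ≤ 0
  · -- Case α ≤ 0
    have hα46 : 2 * ρ + 2 < 4 * (4 * H) - 6 := by
      rcases lt_or_ge H (1 / 2) with hH | hH
      · have := hρ1 hH1 hH; linarith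
      · linarith
    set M : ℝ := max 0 ((2 * ρ + 2) / 2 + 1) with hMdef
    set m' : ℝ := min (2 * (4 * H) - 2) 2 with hmdef
    have hMm : M < m' := by
      apply max_lt <;> apply lt_min <;> linarith
    have hM0 : (0 : ℝ) ≤ M := le_max_left _ _
    have hMα : (2 * ρ + 2) / 2 + 1 ≤ M := le_max_right _ _
    have hm1 : m' ≤ 2 * (4 * H) - 2 := min_le_left _ _
    have hm2 : m' ≤ 2 := min_le_right _ _
    set θ : ℝ := (M + m') / 2 with hθdef
    have hθ0 : 0 ≤ θ := by
      rw [hθdef]; linarith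
    have hθβ : θ ≤ 4 * H := by
      rcases le_total (4 * H) 2 with h | h
      · rw [hθdef]; linarith
      · rw [hθdef]; linarith
    apply bridge (2 * ρ + 2) (4 * H) (2 * ρ + 2) (4 * H) (4 * H) (4 * H) (4 * H) 1
      zero_le_one
    · -- pointwise bound
      intro j h l hj hh0 hhj hl0 hlj hlh
      have hD : 1 ≤ znorm (h - l) := one_le_znorm (sub_ne_zero.mpr (Ne.symm hlh))
      have et : znorm (h - l) ^ (2 * ρ + 2) /
          (znorm h ^ (4 * H) * znorm l ^ (4 * H) *
            znorm (h - j) ^ (4 * H) * znorm (l - j) ^ (4 * H))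
          = znorm (h - l) ^ (2 * ρ + 2) *
            ((znorm h ^ (-(4 * H)) * znorm (h - j) ^ (-(4 * H))) *
              (znorm l ^ (-(4 * H)) * znorm (l - j) ^ (-(4 * H)))) := by
        rw [Real.rpow_neg (znorm_nonneg h), Real.rpow_neg (znorm_nonneg (h - j)),
          Real.rpow_neg (znorm_nonneg l), Real.rpow_neg (znorm_nonneg (l - j)),
          div_eq_mul_inv, mul_inv, mul_inv, mul_inv]
        ring
      rw [et]
      unfold mfun
      have hR : 0 ≤ (znorm h ^ (-(4 * H)) * znorm (h - j) ^ (-(4 * H))) *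
          (znorm l ^ (-(4 * H)) * znorm (l - j) ^ (-(4 * H))) :=
        mul_nonneg (mul_nonneg (pns _ _) (pns _ _)) (mul_nonneg (pns _ _) (pns _ _))
      have hD1 : znorm (h - l) ^ (2 * ρ + 2) ≤ 1 :=
        Real.rpow_le_one_of_one_le_of_nonpos hD hα
      calc znorm j ^ (2 * ρ + 2) * (znorm (h - l) ^ (2 * ρ + 2) *
            ((znorm h ^ (-(4 * H)) * znorm (h - j) ^ (-(4 * H))) *
              (znorm l ^ (-(4 * H)) * znorm (l - j) ^ (-(4 * H)))))
          ≤ znorm j ^ (2 * ρ + 2) * (1 *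
            ((znorm h ^ (-(4 * H)) * znorm (h - j) ^ (-(4 * H))) *
              (znorm l ^ (-(4 * H)) * znorm (l - j) ^ (-(4 * H))))) :=
            mul_le_mul_of_nonneg_left (mul_le_mul_of_nonneg_right hD1 hR) (pns j _)
        _ = 1 * (znorm j ^ (2 * ρ + 2) *
            ((znorm h ^ (-(4 * H)) * znorm (h - j) ^ (-(4 * H))) *
              (znorm l ^ (-(4 * H)) * znorm (l - j) ^ (-(4 * H))))) := by ring
    · -- master
      apply master hθ0 hθβ hθβ hθ0 hθβ hθβ
      · rw [hθdef]; linarith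
      · rw [hθdef]; linarith
      · rw [hθdef]; linarith
  · -- Case α > 0
    push_neg at hα
    have hH' : 1 / 2 ≤ H := by
      by_contra hc
      push_neg at hc
      have := hρ1 hH1 hc
      linarith
    have hαβ : 2 * ρ + 2 < 4 * H - 2 := by
      have := hρ2 hH' hH2
      linarith
    have hβ2 : 2 < 4 * H := by linarith
    have hβ4 : 4 * H < 4 := by linarith
    apply bridge (2 * ρ + 2) (4 * H) 0 (4 * H - (2 * ρ + 2)) (4 * H - 2 * (2 * ρ + 2))
      (4 * H) (4 * H - (2 * ρ + 2)) ((4 : ℝ) ^ (2 * ρ + 2))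
      (Real.rpow_nonneg (by norm_num) _)
    · -- pointwise bound
      intro j h l hj hh0 hhj hl0 hlj hlh
      have hA : 0 < znorm h := znorm_pos hh0
      have hB : 0 < znorm (h - j) := znorm_pos (sub_ne_zero.mpr hhj)
      have hY : 0 < znorm (l - j) := znorm_pos (sub_ne_zero.mpr hlj)
      have et : znorm (h - l) ^ (2 * ρ + 2) /
          (znorm h ^ (4 * H) * znorm l ^ (4 * H) *
            znorm (h - j) ^ (4 * H) * znorm (l - j) ^ (4 * H))
          = znorm (h - l) ^ (2 * ρ + 2) *
            ((znorm h ^ (-(4 * H)) * znorm (h - j) ^ (-(4 * H))) *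
              (znorm l ^ (-(4 * H)) * znorm (l - j) ^ (-(4 * H)))) := by
        rw [Real.rpow_neg (znorm_nonneg h), Real.rpow_neg (znorm_nonneg (h - j)),
          Real.rpow_neg (znorm_nonneg l), Real.rpow_neg (znorm_nonneg (l - j)),
          div_eq_mul_inv, mul_inv, mul_inv, mul_inv]
        ring
      rw [et]
      unfold mfun
      rw [Real.rpow_zero]
      have hR : 0 ≤ (znorm h ^ (-(4 * H)) * znorm (h - j) ^ (-(4 * H))) *
          (znorm l ^ (-(4 * H)) * znorm (l - j) ^ (-(4 * H))) :=
        mul_nonneg (mul_nonneg (pns _ _) (pns _ _)) (mul_nonneg (pns _ _) (pns _ _))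
      have h2AB : znorm j ≤ 2 * (znorm h * znorm (h - j)) := by
        nlinarith [znorm_le j h, one_le_znorm hh0, one_le_znorm (sub_ne_zero.mpr hhj)]
      have hDle : znorm (h - l) ≤ 2 * (znorm (h - j) * znorm (l - j)) := by
        nlinarith [znorm_sub_le h l j, one_le_znorm (sub_ne_zero.mpr hhj),
          one_le_znorm (sub_ne_zero.mpr hlj)]
      have e5 : znorm j ^ (2 * ρ + 2) ≤
          2 ^ (2 * ρ + 2) * (znorm h ^ (2 * ρ + 2) * znorm (h - j) ^ (2 * ρ + 2)) := by
        calc znorm j ^ (2 * ρ + 2) ≤ (2 * (znorm h * znorm (h - j))) ^ (2 * ρ + 2) :=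
            Real.rpow_le_rpow (znorm_nonneg j) h2AB hα.le
          _ = 2 ^ (2 * ρ + 2) * (znorm h * znorm (h - j)) ^ (2 * ρ + 2) :=
            Real.mul_rpow (by norm_num) (mul_nonneg (znorm_nonneg _) (znorm_nonneg _))
          _ = 2 ^ (2 * ρ + 2) * (znorm h ^ (2 * ρ + 2) * znorm (h - j) ^ (2 * ρ + 2)) := by
            rw [Real.mul_rpow (znorm_nonneg _) (znorm_nonneg _)]
      have e6 : znorm (h - l) ^ (2 * ρ + 2) ≤
          2 ^ (2 * ρ + 2) * (znorm (h - j) ^ (2 * ρ + 2) * znorm (l - j) ^ (2 * ρ + 2)) := by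
        calc znorm (h - l) ^ (2 * ρ + 2)
            ≤ (2 * (znorm (h - j) * znorm (l - j))) ^ (2 * ρ + 2) :=
            Real.rpow_le_rpow (znorm_nonneg _) hDle hα.le
          _ = 2 ^ (2 * ρ + 2) * (znorm (h - j) * znorm (l - j)) ^ (2 * ρ + 2) :=
            Real.mul_rpow (by norm_num) (mul_nonneg (znorm_nonneg _) (znorm_nonneg _))
          _ = 2 ^ (2 * ρ + 2) *
              (znorm (h - j) ^ (2 * ρ + 2) * znorm (l - j) ^ (2 * ρ + 2)) := by
            rw [Real.mul_rpow (znorm_nonneg _) (znorm_nonneg _)]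
      have eA : znorm h ^ (-(4 * H - (2 * ρ + 2)))
          = znorm h ^ (2 * ρ + 2) * znorm h ^ (-(4 * H)) := by
        rw [show -(4 * H - (2 * ρ + 2)) = (2 * ρ + 2) + -(4 * H) by ring,
          Real.rpow_add hA (2 * ρ + 2) (-(4 * H))]
      have eB : znorm (h - j) ^ (-(4 * H - 2 * (2 * ρ + 2)))
          = znorm (h - j) ^ (2 * ρ + 2) *
            (znorm (h - j) ^ (2 * ρ + 2) * znorm (h - j) ^ (-(4 * H))) := by
        rw [show -(4 * H - 2 * (2 * ρ + 2)) = (2 * ρ + 2) + ((2 * ρ + 2) + -(4 * H)) by ring,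
          Real.rpow_add hB (2 * ρ + 2) ((2 * ρ + 2) + -(4 * H)),
          Real.rpow_add hB (2 * ρ + 2) (-(4 * H))]
      have eY : znorm (l - j) ^ (-(4 * H - (2 * ρ + 2)))
          = znorm (l - j) ^ (2 * ρ + 2) * znorm (l - j) ^ (-(4 * H)) := by
        rw [show -(4 * H - (2 * ρ + 2)) = (2 * ρ + 2) + -(4 * H) by ring,
          Real.rpow_add hY (2 * ρ + 2) (-(4 * H))]
      rw [eA, eB, eY]
      calc znorm j ^ (2 * ρ + 2) * (znorm (h - l) ^ (2 * ρ + 2) *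
            ((znorm h ^ (-(4 * H)) * znorm (h - j) ^ (-(4 * H))) *
              (znorm l ^ (-(4 * H)) * znorm (l - j) ^ (-(4 * H)))))
          ≤ (2 ^ (2 * ρ + 2) * (znorm h ^ (2 * ρ + 2) * znorm (h - j) ^ (2 * ρ + 2))) *
            ((2 ^ (2 * ρ + 2) *
              (znorm (h - j) ^ (2 * ρ + 2) * znorm (l - j) ^ (2 * ρ + 2))) *
              ((znorm h ^ (-(4 * H)) * znorm (h - j) ^ (-(4 * H))) *
                (znorm l ^ (-(4 * H)) * znorm (l - j) ^ (-(4 * H))))) := by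
            apply mul_le_mul e5 (mul_le_mul_of_nonneg_right e6 hR) _ _
            · exact mul_nonneg (pns _ _) hR
            · exact mul_nonneg (Real.rpow_nonneg (by norm_num) _)
                (mul_nonneg (pns _ _) (pns _ _))
        _ = (4 : ℝ) ^ (2 * ρ + 2) * (1 *
            ((znorm h ^ (2 * ρ + 2) * znorm h ^ (-(4 * H)) *
              (znorm (h - j) ^ (2 * ρ + 2) *
                (znorm (h - j) ^ (2 * ρ + 2) * znorm (h - j) ^ (-(4 * H))))) *
              (znorm l ^ (-(4 * H)) *
                (znorm (l - j) ^ (2 * ρ + 2) * znorm (l - j) ^ (-(4 * H)))))) := by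
            rw [show (4 : ℝ) = 2 * 2 by norm_num,
              Real.mul_rpow (by norm_num) (by norm_num)]
            ring
    · -- master
      apply master (le_refl 0) (by linarith) (by linarith) (by linarith) (by linarith)
        (le_refl _) (by linarith) (by linarith) (by linarith)
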